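/- Let $\epsilon>0$, $c>0$ with $\epsilon c<1$, $N>0$, and $v\in\mathbb{R}^2$ with $\epsilon|v|<1$, and set $\varGamma=(1-\epsilon^2|v|^2)^{-1/2}$. Define the $3\times3$ matrices $S_2=\begin{pmatrix}1 & -2\epsilon^2 N c^2 \varGamma v^{\mathsf T}\\ 0 & N^2 c^2 I_2\end{pmatrix}$ and $A_0=\begin{pmatrix}\varGamma(1-\epsilon^4 c^2|v|^2) & 2\epsilon^2 N c^2 v^{\mathsf T}\\ 0 & \varGamma(I_2-\epsilon^2 v\otimes v)\end{pmatrix}$. Then $S_2A_0$ is symmetric and positive definite, with eigenvalues $\varGamma(1-\epsilon^4 c^2|v|^2)$, $\varGamma N^2c^2$, and $\varGamma N^2 c^2(1-\epsilon^2|v|^2)$, all positive. -/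

import Mathlib

open Matrix Polynomial

set_option maxHeartbeats 1000000 in
theorem stmt2 (ε c N : ℝ) (hε : 0 < ε) (hc : 0 < c) (hεc : ε * c < 1) (hN : 0 < N)
    (v : Fin 2 → ℝ) (hv : ε * Real.sqrt (v 0 ^ 2 + v 1 ^ 2) < 1) :
    let Γ : ℝ := 1 / Real.sqrt (1 - ε ^ 2 * (v 0 ^ 2 + v 1 ^ 2))
    let S₂ : Matrix (Fin 3) (Fin 3) ℝ :=
      !![1, -2 * ε ^ 2 * N * c ^ 2 * Γ * v 0, -2 * ε ^ 2 * N * c ^ 2 * Γ * v 1;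
         0, N ^ 2 * c ^ 2, 0;
         0, 0, N ^ 2 * c ^ 2]
    let A₀ : Matrix (Fin 3) (Fin 3) ℝ :=
      !![Γ * (1 - ε ^ 4 * c ^ 2 * (v 0 ^ 2 + v 1 ^ 2)), 2 * ε ^ 2 * N * c ^ 2 * v 0,
           2 * ε ^ 2 * N * c ^ 2 * v 1;
         0, Γ * (1 - ε ^ 2 * v 0 ^ 2), -(ε ^ 2) * Γ * v 0 * v 1;
         0, -(ε ^ 2) * Γ * v 0 * v 1, Γ * (1 - ε ^ 2 * v 1 ^ 2)]
    let lam₁ : ℝ := Γ * (1 - ε ^ 4 * c ^ 2 * (v 0 ^ 2 + v 1 ^ 2))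
    let lam₂ : ℝ := Γ * N ^ 2 * c ^ 2
    let lam₃ : ℝ := Γ * N ^ 2 * c ^ 2 * (1 - ε ^ 2 * (v 0 ^ 2 + v 1 ^ 2))
    (S₂ * A₀).IsSymm ∧ (S₂ * A₀).PosDef ∧
      (S₂ * A₀).charpoly = (X - C lam₁) * (X - C lam₂) * (X - C lam₃) ∧
      0 < lam₁ ∧ 0 < lam₂ ∧ 0 < lam₃ := by
  intro Γ S₂ A₀ lam₁ lam₂ lam₃
  have hs0 : (0:ℝ) ≤ v 0 ^ 2 + v 1 ^ 2 := by positivity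
  have hεs : ε ^ 2 * (v 0 ^ 2 + v 1 ^ 2) < 1 := by
    nlinarith [Real.sq_sqrt hs0, Real.sqrt_nonneg (v 0 ^ 2 + v 1 ^ 2),
      mul_nonneg hε.le (Real.sqrt_nonneg (v 0 ^ 2 + v 1 ^ 2))]
  have hg : 0 < 1 - ε ^ 2 * (v 0 ^ 2 + v 1 ^ 2) := by linarith
  have hΓdef : Γ = 1 / Real.sqrt (1 - ε ^ 2 * (v 0 ^ 2 + v 1 ^ 2)) := rfl
  have hΓpos : 0 < Γ := by
    rw [hΓdef]; exact div_pos one_pos (Real.sqrt_pos.mpr hg)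
  have hΓ2 : Γ ^ 2 * (1 - ε ^ 2 * (v 0 ^ 2 + v 1 ^ 2)) = 1 := by
    rw [hΓdef, div_pow, one_pow, Real.sq_sqrt hg.le]
    exact one_div_mul_cancel hg.ne'
  have h14 : ε ^ 4 * c ^ 2 * (v 0 ^ 2 + v 1 ^ 2) < 1 := by
    have key : (0:ℝ) ≤ (1 - (ε*c)^2) * (ε^2*(v 0^2+v 1^2)) :=
      mul_nonneg (by nlinarith [mul_pos hε hc]) (by positivity)
    nlinarith [key, hεs]
  have hl1def : lam₁ = Γ * (1 - ε ^ 4 * c ^ 2 * (v 0 ^ 2 + v 1 ^ 2)) := rfl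
  have hl2def : lam₂ = Γ * N ^ 2 * c ^ 2 := rfl
  have hl3def : lam₃ = Γ * N ^ 2 * c ^ 2 * (1 - ε ^ 2 * (v 0 ^ 2 + v 1 ^ 2)) := rfl
  have hSdef : S₂ = !![1, -2 * ε ^ 2 * N * c ^ 2 * Γ * v 0, -2 * ε ^ 2 * N * c ^ 2 * Γ * v 1;
         0, N ^ 2 * c ^ 2, 0; 0, 0, N ^ 2 * c ^ 2] := rfl
  have hAdef : A₀ = !![Γ * (1 - ε ^ 4 * c ^ 2 * (v 0 ^ 2 + v 1 ^ 2)), 2 * ε ^ 2 * N * c ^ 2 * v 0,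
           2 * ε ^ 2 * N * c ^ 2 * v 1;
         0, Γ * (1 - ε ^ 2 * v 0 ^ 2), -(ε ^ 2) * Γ * v 0 * v 1;
         0, -(ε ^ 2) * Γ * v 0 * v 1, Γ * (1 - ε ^ 2 * v 1 ^ 2)] := rfl
  clear_value Γ S₂ A₀ lam₁ lam₂ lam₃
  clear hΓdef hv
  subst hl1def hl2def hl3def hSdef hAdef
  have hl1 : 0 < Γ * (1 - ε ^ 4 * c ^ 2 * (v 0 ^ 2 + v 1 ^ 2)) := mul_pos hΓpos (by linarith)
  have hl2 : 0 < Γ * N ^ 2 * c ^ 2 := by positivity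
  have hl3 : 0 < Γ * N ^ 2 * c ^ 2 * (1 - ε ^ 2 * (v 0 ^ 2 + v 1 ^ 2)) := by positivity
  refine ?_
  have hM : (!![1, -2 * ε ^ 2 * N * c ^ 2 * Γ * v 0, -2 * ε ^ 2 * N * c ^ 2 * Γ * v 1;
         0, N ^ 2 * c ^ 2, 0; 0, 0, N ^ 2 * c ^ 2] : Matrix (Fin 3) (Fin 3) ℝ) *
      !![Γ * (1 - ε ^ 4 * c ^ 2 * (v 0 ^ 2 + v 1 ^ 2)), 2 * ε ^ 2 * N * c ^ 2 * v 0,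
           2 * ε ^ 2 * N * c ^ 2 * v 1;
         0, Γ * (1 - ε ^ 2 * v 0 ^ 2), -(ε ^ 2) * Γ * v 0 * v 1;
         0, -(ε ^ 2) * Γ * v 0 * v 1, Γ * (1 - ε ^ 2 * v 1 ^ 2)] =
      !![Γ * (1 - ε ^ 4 * c ^ 2 * (v 0 ^ 2 + v 1 ^ 2)), 0, 0;
         0, N ^ 2 * c ^ 2 * Γ * (1 - ε ^ 2 * v 0 ^ 2),
            N ^ 2 * c ^ 2 * (-(ε ^ 2) * Γ * v 0 * v 1);
         0, N ^ 2 * c ^ 2 * (-(ε ^ 2) * Γ * v 0 * v 1),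
            N ^ 2 * c ^ 2 * Γ * (1 - ε ^ 2 * v 1 ^ 2)] := by
    rw [Matrix.mul_fin_three]
    rw [Equiv.apply_eq_iff_eq]
    simp only [Matrix.vecCons, Fin.cons_inj, and_true, true_and]
    and_intros <;> try ring
    · linear_combination (-(2 * ε ^ 2 * N * c ^ 2 * v 0)) * hΓ2
    · linear_combination (-(2 * ε ^ 2 * N * c ^ 2 * v 1)) * hΓ2
  rw [hM]
  set D : Matrix (Fin 3) (Fin 3) ℝ :=
    !![Γ * (1 - ε ^ 4 * c ^ 2 * (v 0 ^ 2 + v 1 ^ 2)), 0, 0;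
       0, N ^ 2 * c ^ 2 * Γ * (1 - ε ^ 2 * v 0 ^ 2),
          N ^ 2 * c ^ 2 * (-(ε ^ 2) * Γ * v 0 * v 1);
       0, N ^ 2 * c ^ 2 * (-(ε ^ 2) * Γ * v 0 * v 1),
          N ^ 2 * c ^ 2 * Γ * (1 - ε ^ 2 * v 1 ^ 2)] with hD
  have hherm : D.IsHermitian := by
    rw [Matrix.IsHermitian, hD]
    ext i j
    fin_cases i <;> fin_cases j <;> simp [Matrix.conjTranspose_apply, Matrix.vecHead, Matrix.vecTail]
  refine ⟨?_, Matrix.PosDef.of_dotProduct_mulVec_pos hherm ?_, ?_, hl1, hl2, hl3⟩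
  · rw [Matrix.IsSymm, hD]
    ext i j
    fin_cases i <;> fin_cases j <;> simp [Matrix.vecHead, Matrix.vecTail]
  · intro x hx
    have key : 0 ≤ ε ^ 2 * (N ^ 2 * c ^ 2 * Γ) *
        ((v 0 ^ 2 + v 1 ^ 2) * (x 1 ^ 2 + x 2 ^ 2) - (v 0 * x 1 + v 1 * x 2) ^ 2) := by
      apply mul_nonneg (by positivity)
      nlinarith [sq_nonneg (v 0 * x 2 - v 1 * x 1)]
    rw [hD]
    simp only [star_trivial, dotProduct, Matrix.mulVec, Fin.sum_univ_three,
      Matrix.cons_val_zero, Matrix.cons_val_one, Matrix.head_cons, Matrix.cons_val_two,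
      Matrix.tail_cons, Matrix.of_apply, Matrix.cons_val', Matrix.empty_val',
      Matrix.cons_val_fin_one, Matrix.head_fin_const, cons_dotProduct,
      dotProduct_of_isEmpty]
    have h3 : x 0 ≠ 0 ∨ x 1 ≠ 0 ∨ x 2 ≠ 0 := by
      by_contra h
      push_neg at h
      exact hx (by ext i; fin_cases i <;> simp [h.1, h.2.1, h.2.2])
    rcases h3 with hi | hi | hi <;>
      nlinarith [key, mul_pos hl1 (mul_self_pos.mpr hi), mul_pos hl3 (mul_self_pos.mpr hi),
        mul_nonneg hl1.le (mul_self_nonneg (x 0)),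
        mul_nonneg hl3.le (mul_self_nonneg (x 1)), mul_nonneg hl3.le (mul_self_nonneg (x 2))]
  · rw [Matrix.charpoly, Matrix.det_fin_three, hD]
    simp only [charmatrix_apply, Matrix.diagonal_apply, Fin.reduceEq, if_true, if_false,
      reduceIte, Matrix.cons_val_zero, Matrix.cons_val_one,
      Matrix.head_cons, Matrix.cons_val_two, Matrix.tail_cons, Matrix.of_apply, Matrix.cons_val',
      Matrix.empty_val', Matrix.cons_val_fin_one, Matrix.head_fin_const, ne_eq,
      Fin.isValue, map_zero, _root_.map_mul, map_sub, map_add, _root_.map_one, map_pow, map_neg, map_ofNat,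
      Polynomial.C_mul, Polynomial.C_sub, Polynomial.C_add, Polynomial.C_pow, Polynomial.C_1,
      Polynomial.C_neg]
    ring
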